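/- Let q ≥ 0 and let n, k be positive integers with n − q even, n − q > 0, and (q+1)(2^k − 1) ≤ n. Then there exists an edge k-coloring of K_n such that every matching in K_n covering exactly n − q vertices contains at least one edge of each of the k colors. -/

import Mathlib

open Finset

noncomputable def minv {n : ℕ} (e : Sym2 (Fin n)) : Fin n :=
  Sym2.lift ⟨fun a b => min a b, fun a b => min_comm a b⟩ e

lemma minv_mem {n : ℕ} (e : Sym2 (Fin n)) : minv e ∈ e := by
  induction e using Sym2.ind with
  | _ x y =>
    have : minv (s(x, y)) = min x y := rfl
    rw [this]
    rcases min_cases x y with ⟨h, _⟩ | ⟨h, _⟩ <;> rw [h] <;> simp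

lemma minv_le {n : ℕ} {e : Sym2 (Fin n)} {v : Fin n} (h : v ∈ e) : minv e ≤ v := by
  induction e using Sym2.ind with
  | _ x y =>
    simp [Sym2.mem_iff] at h
    rcases h with rfl | rfl <;> simp [minv]

def afun (q c : ℕ) : ℕ := (2 ^ c - 1) * (q + 1)

lemma afun_mono (q : ℕ) {c d : ℕ} (h : c ≤ d) : afun q c ≤ afun q d :=
  Nat.mul_le_mul_right _ (Nat.sub_le_sub_right (Nat.pow_le_pow_right (by norm_num) h) 1)

lemma afun_succ (q c : ℕ) : afun q (c + 1) = 2 * afun q c + (q + 1) := by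
  have hx : 1 ≤ 2 ^ c := Nat.one_le_two_pow
  have hy : q + 1 ≤ 2 ^ c * (q + 1) := Nat.le_mul_of_pos_left _ (by omega)
  unfold afun
  rw [pow_succ, mul_comm (2^c) 2, Nat.sub_mul, Nat.sub_mul, mul_assoc]
  omega

def gfun (q k m : ℕ) : ℕ := #{c ∈ range (k - 1) | afun q (c + 1) ≤ m}

lemma gfun_lt {q k m : ℕ} (hk : 1 ≤ k) : gfun q k m < k := by
  have h := card_filter_le (range (k - 1)) (fun c => afun q (c + 1) ≤ m)
  rw [card_range] at h
  have : gfun q k m ≤ k - 1 := h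
  omega

lemma gfun_le {q k m c : ℕ} (h : m < afun q (c + 1)) : gfun q k m ≤ c := by
  refine le_trans (card_le_card (fun x hx => ?_)) (by simp : #(range c) ≤ c)
  simp only [mem_filter, mem_range] at hx ⊢
  by_contra hxc
  exact absurd (le_trans (afun_mono q (by omega : c + 1 ≤ x + 1)) hx.2) (by omega)

lemma gfun_spec {q k m : ℕ} (h : gfun q k m < k - 1) : m < afun q (gfun q k m + 1) := by
  by_contra hle
  push_neg at hle
  have hsub : range (gfun q k m + 1) ⊆ {c ∈ range (k - 1) | afun q (c + 1) ≤ m} := by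
    intro x hx
    simp only [mem_range] at hx
    simp only [mem_filter, mem_range]
    exact ⟨by omega, le_trans (afun_mono q (by omega)) hle⟩
  have h2 : gfun q k m + 1 ≤ gfun q k m := by
    have := card_le_card hsub
    rw [card_range] at this
    exact this
  omega

/-- If `(q+1)(2^k - 1) ≤ n` (with `n - q` positive and even), then there is an edge
`k`-coloring of `K_n` such that every matching covering exactly `n - q` vertices
contains an edge of each of the `k` colors. -/
theorem stmt_6 (q n k : ℕ) (hk : 1 ≤ k) (hpos : 0 < n - q) (heven : Even (n - q))
    (hbound : (q + 1) * (2 ^ k - 1) ≤ n) :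
    ∃ φ : Sym2 (Fin n) → Fin k,
      ∀ M : Finset (Sym2 (Fin n)),
        (∀ e ∈ M, ¬ e.IsDiag) →
        (∀ e ∈ M, ∀ f ∈ M, e ≠ f → ∀ v : Fin n, v ∈ e → v ∉ f) →
        2 * M.card = n - q →
        ∀ col : Fin k, ∃ e ∈ M, φ e = col := by
  classical
  have hqn : q < n := by omega
  refine ⟨fun e => ⟨gfun q k (minv e).val, gfun_lt hk⟩, ?_⟩
  intro M hdiag hdisj hcard col
  by_contra hno
  push_neg at hno
  set c := col.val with hc
  have hck : c < k := col.isLt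
  -- Key fact: every matching edge whose min vertex is in the prefix has min vertex in [0, afun q c)
  have keyA : ∀ e ∈ M, (minv e).val < afun q (c + 1) → (minv e).val < afun q c := by
    intro e he hlt
    have h1 : gfun q k (minv e).val ≤ c := gfun_le hlt
    have h2 : gfun q k (minv e).val ≠ c := by
      intro h
      exact hno e he (Fin.ext h)
    have h4 : gfun q k (minv e).val < k - 1 := by omega
    exact lt_of_lt_of_le (gfun_spec h4) (afun_mono q (by omega))
  have han : afun q (c + 1) ≤ n := by
    refine le_trans (afun_mono q (by omega : c + 1 ≤ k)) ?_
    unfold afun; rw [mul_comm]; exact hbound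
  -- per-edge vertex count
  have hedge2 : ∀ e ∈ M, #{v : Fin n | v ∈ e} = 2 := by
    intro e he
    have key : ∀ (x y : Fin n), ¬(s(x, y)).IsDiag →
        #{v : Fin n | v ∈ s(x, y)} = 2 := by
      intro x y hd
      have hne : x ≠ y := by simpa using hd
      have hset : ({v : Fin n | v ∈ s(x, y)} : Finset (Fin n)) = {x, y} := by
        ext v; simp [Sym2.mem_iff]
      rw [hset, card_insert_of_notMem (by simp [hne]), card_singleton]
    exact Sym2.ind key e (hdiag e he)
  -- covered vertices
  set C : Finset (Fin n) := {v : Fin n | ∃ e ∈ M, v ∈ e} with hCdef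
  have hCcard : C.card = n - q := by
    have hC : C = M.biUnion (fun e => {v : Fin n | v ∈ e}) := by
      ext v; simp [hCdef]
    rw [hC, card_biUnion]
    · rw [Finset.sum_congr rfl hedge2, Finset.sum_const, smul_eq_mul, mul_comm]
      exact hcard
    · intro e he f hf hef
      rw [Function.onFun, Finset.disjoint_left]
      intro v hv hv'
      simp only [mem_filter, mem_univ, true_and] at hv hv'
      exact hdisj e he f hf hef v hv hv'
  -- uncovered vertices
  set U : Finset (Fin n) := {v : Fin n | ¬∃ e ∈ M, v ∈ e} with hUdef
  have hUcard : U.card = q := by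
    have hUC : U = Cᶜ := by
      ext v; simp [hUdef, hCdef]
    rw [hUC, Finset.card_compl, hCcard, Fintype.card_fin]
    omega
  -- the prefix
  set P : Finset (Fin n) := {v : Fin n | (v : ℕ) < afun q (c + 1)} with hPdef
  have hPcard : P.card = afun q (c + 1) := by
    have hP : P = Finset.attachFin (range (afun q (c + 1)))
        (fun m hm => lt_of_lt_of_le (mem_range.1 hm) han) := by
      ext v; simp [hPdef]
    rw [hP, Finset.card_attachFin, card_range]
  set Pc : Finset (Fin n) := P.filter (fun v => ∃ e ∈ M, v ∈ e) with hPcdef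
  have hPsub : P ⊆ Pc ∪ U := by
    intro v hv
    by_cases h : ∃ e ∈ M, v ∈ e
    · exact Finset.mem_union_left _ (Finset.mem_filter.2 ⟨hv, h⟩)
    · exact Finset.mem_union_right _
        (by simp only [hUdef, mem_filter, mem_univ, true_and]; exact h)
  have hP_le : P.card ≤ Pc.card + q := by
    calc P.card ≤ (Pc ∪ U).card := card_le_card hPsub
    _ ≤ Pc.card + U.card := card_union_le _ _
    _ = Pc.card + q := by rw [hUcard]
  -- the covering-edge function
  set ec : Fin n → Sym2 (Fin n) :=
    fun v => if h : ∃ e ∈ M, v ∈ e then h.choose else s(v, v) with hecdef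
  have hec : ∀ v ∈ Pc, ec v ∈ M ∧ v ∈ ec v := by
    intro v hv
    have h : ∃ e ∈ M, v ∈ e := (Finset.mem_filter.1 hv).2
    simp only [hecdef, dif_pos h]
    exact ⟨h.choose_spec.1, h.choose_spec.2⟩
  have himM : ∀ e0 ∈ Pc.image ec, e0 ∈ M := by
    intro e0 he0
    obtain ⟨v, hv, rfl⟩ := Finset.mem_image.1 he0
    exact (hec v hv).1
  have hPc_le : Pc.card ≤ 2 * (Pc.image ec).card := by
    apply card_le_mul_card_image
    intro e0 he0
    have hsub : {v ∈ Pc | ec v = e0} ⊆ univ.filter (fun v => v ∈ e0) := by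
      intro v hv
      obtain ⟨hv1, hv2⟩ := Finset.mem_filter.1 hv
      simp only [mem_filter, mem_univ, true_and]
      rw [← hv2]
      exact (hec v hv1).2
    calc #{v ∈ Pc | ec v = e0} ≤ #(univ.filter (fun v => v ∈ e0)) := card_le_card hsub
    _ = 2 := hedge2 e0 (himM e0 he0)
  -- the min-vertex injection
  set T : Finset (Fin n) := {v : Fin n | (v : ℕ) < afun q c} with hTdef
  have himg_le : (Pc.image ec).card ≤ T.card := by
    apply Finset.card_le_card_of_injOn minv
    · intro e0 he0
      obtain ⟨v, hv, rfl⟩ := Finset.mem_image.1 he0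
      have hvP : (v : ℕ) < afun q (c + 1) := by
        have := (Finset.mem_filter.1 ((Finset.mem_filter.1 hv).1)).2
        exact this
      have hle : minv (ec v) ≤ v := minv_le (hec v hv).2
      have hlt : (minv (ec v)).val < afun q (c + 1) :=
        lt_of_le_of_lt (Fin.le_def.1 hle) hvP
      simp only [hTdef, mem_coe, mem_filter, mem_univ, true_and]
      exact keyA (ec v) (hec v hv).1 hlt
    · intro e1 he1 e2 he2 heq
      by_contra hne
      have h1 : minv e1 ∈ e1 := minv_mem e1
      have h2 : minv e1 ∈ e2 := heq ▸ minv_mem e2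
      exact hdisj e1 (himM e1 he1) e2 (himM e2 he2) hne (minv e1) h1 h2
  have hT_le : T.card ≤ afun q c := by
    rw [← card_range (afun q c)]
    apply Finset.card_le_card_of_injOn (fun v : Fin n => (v : ℕ))
    · intro v hv
      simp only [hTdef, mem_coe, mem_filter, mem_univ, true_and] at hv
      simpa using hv
    · intro v _ w _ h
      exact Fin.ext h
  have := afun_succ q c
  omega
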